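/- (Translational symmetry of Pre for the LIP system.) Let A = e^{A_LIP Δt} and B = A_LIP⁻¹(e^{A_LIP Δt} − I) B_LIP be the discretized LIP matrices with ω = √(g/h). For the 2D-decoupled 4-state system, (A − I)ΔW = −B Δw, where Δw = (Δw₁, Δw₂) and ΔW = (Δw₁, 0, Δw₂, 0). Consequently A(x + ΔW) + B(u + Δw) = (A x + B u) + ΔW for all x, u. -/

import Mathlib

open Real Matrix

/-- Translational symmetry of the discretized LIP dynamics:
(A − I)ΔW = −B Δw, hence A(x + ΔW) + B(u + Δw) = (A x + B u) + ΔW. -/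
theorem lip_translation_symmetry (g h dt : ℝ) (hg : 0 < g) (hh : 0 < h)
    (ω : ℝ) (hω : ω = Real.sqrt (g / h))
    (A : Matrix (Fin 4) (Fin 4) ℝ)
    (hA : A = !![Real.cosh (ω * dt), Real.sinh (ω * dt) / ω, 0, 0;
                 ω * Real.sinh (ω * dt), Real.cosh (ω * dt), 0, 0;
                 0, 0, Real.cosh (ω * dt), Real.sinh (ω * dt) / ω;
                 0, 0, ω * Real.sinh (ω * dt), Real.cosh (ω * dt)])
    (B : Matrix (Fin 4) (Fin 2) ℝ)
    (hB : B = !![1 - Real.cosh (ω * dt), 0;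
                 -(ω * Real.sinh (ω * dt)), 0;
                 0, 1 - Real.cosh (ω * dt);
                 0, -(ω * Real.sinh (ω * dt))])
    (Δw : Fin 2 → ℝ) (ΔW : Fin 4 → ℝ)
    (hΔW : ΔW = ![Δw 0, 0, Δw 1, 0]) :
    (A - 1) *ᵥ ΔW = -(B *ᵥ Δw) ∧
      ∀ (x : Fin 4 → ℝ) (u : Fin 2 → ℝ),
        A *ᵥ (x + ΔW) + B *ᵥ (u + Δw) = (A *ᵥ x + B *ᵥ u) + ΔW := by
  subst hA hB hΔW
  constructor
  · funext i
    fin_cases i <;>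
      simp [mulVec, dotProduct, Fin.sum_univ_succ, Matrix.sub_apply, one_apply] <;> ring
  · intro x u
    funext i
    fin_cases i <;>
      simp [mulVec, dotProduct, Fin.sum_univ_succ, Matrix.vecHead, Matrix.vecTail] <;> ring
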